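/- Let P be a group of errors and C an [[n,k]] encoder with distance d_c and degenerate distance d_q ≥ 2. Then a^{⊗N}(d) = 0 whenever 0 < d < d_c, and there exists a constant K > 0, depending only on C, such that for every N ≥ 1 and every d ≥ d_c: a^{⊗N}(d) ≤ K^d · (N/d)^{(d−d_c)/d_q + 1}. -/

import Mathlib

open scoped BigOperators

namespace Turbo

variable {P : Type} [Group P]

/-- Weight of an error: the number of non-identity coordinates. -/
noncomputable def wt {n : ℕ} (E : Fin n → P) : ℕ := {i | E i ≠ 1}.ncard

/-- Pad a finite sequence of blocks to an infinite one by identity blocks. -/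
def pad {β : Type} [One β] {N : ℕ} (x : Fin N → β) : ℕ → β :=
  fun i => if h : i < N then x ⟨i, h⟩ else 1

/-- All blocks of a stabilizer sequence have coordinates in `Z`. -/
def ZValued (Z : Subgroup P) {s : ℕ} (S : ℕ → Fin s → P) : Prop := ∀ i j, S i j ∈ Z

/-- Intermediate memory error `M_i` of a convolutional morphism built from the seed `F`. -/
def convMem {m k s n : ℕ}
    (F : ((Fin m → P) × (Fin k → P) × (Fin s → P)) → ((Fin n → P) × (Fin m → P)))
    (M : Fin m → P) (L : ℕ → Fin k → P) (S : ℕ → Fin s → P) : ℕ → Fin m → P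
  | 0 => M
  | i + 1 => (F (convMem F M L S i, L i, S i)).2

/-- The `i`-th physical output block `P_{i+1}` of the convolutional morphism. -/
def convOut {m k s n : ℕ}
    (F : ((Fin m → P) × (Fin k → P) × (Fin s → P)) → ((Fin n → P) × (Fin m → P)))
    (M : Fin m → P) (L : ℕ → Fin k → P) (S : ℕ → Fin s → P) (i : ℕ) : Fin n → P :=
  (F (convMem F M L S i, L i, S i)).1

/-- Weight of the physical output `π_N` (first `N` physical blocks). -/
noncomputable def outWt {m k s n : ℕ}
    (F : ((Fin m → P) × (Fin k → P) × (Fin s → P)) → ((Fin n → P) × (Fin m → P)))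
    (M : Fin m → P) (L : ℕ → Fin k → P) (S : ℕ → Fin s → P) (N : ℕ) : ℕ :=
  ∑ i ∈ Finset.range N, wt (convOut F M L S i)

/-- Weight of the full output `𝒞_N(E) = (P_1, …, P_N, M_N)`. -/
noncomputable def fullWt {m k s n : ℕ}
    (F : ((Fin m → P) × (Fin k → P) × (Fin s → P)) → ((Fin n → P) × (Fin m → P)))
    (M : Fin m → P) (L : ℕ → Fin k → P) (S : ℕ → Fin s → P) (N : ℕ) : ℕ :=
  outWt F M L S N + wt (convMem F M L S N)

/-- The output `𝒞_∞(E)` of the infinite convolutional morphism has infinite weight. -/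
def InfOutput {m k s n : ℕ}
    (F : ((Fin m → P) × (Fin k → P) × (Fin s → P)) → ((Fin n → P) × (Fin m → P)))
    (M : Fin m → P) (L : ℕ → Fin k → P) (S : ℕ → Fin s → P) : Prop :=
  {i : ℕ | convOut F M L S i ≠ 1}.Infinite

/-- The information part of an infinite input has exactly one non-identity letter. -/
def OneInfoLetter {k : ℕ} (L : ℕ → Fin k → P) : Prop :=
  ∃! p : ℕ × Fin k, L p.1 p.2 ≠ 1

/-- A recursive `[[n,k,s,m]]` morphism. -/
def Recursive {m k s n : ℕ} (Z : Subgroup P)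
    (F : ((Fin m → P) × (Fin k → P) × (Fin s → P)) → ((Fin n → P) × (Fin m → P))) : Prop :=
  ∀ (L : ℕ → Fin k → P) (S : ℕ → Fin s → P),
    OneInfoLetter L → ZValued Z S → InfOutput F 1 L S

/-- A systematic morphism: the output weight dominates the information weight. -/
def Systematic {m k s n : ℕ}
    (F : ((Fin m → P) × (Fin k → P) × (Fin s → P)) → ((Fin n → P) × (Fin m → P))) : Prop :=
  ∀ (N : ℕ) (M : Fin m → P) (L : ℕ → Fin k → P) (S : ℕ → Fin s → P),
    (∑ i ∈ Finset.range N, wt (L i)) ≤ fullWt F M L S N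

/-- The set `M₁` of memory errors giving an infinite output on trivial information input. -/
def M1 {m k s n : ℕ} (Z : Subgroup P)
    (F : ((Fin m → P) × (Fin k → P) × (Fin s → P)) → ((Fin n → P) × (Fin m → P))) :
    Set (Fin m → P) :=
  {M | ∀ S : ℕ → Fin s → P, ZValued Z S → InfOutput F M 1 S}

/-- The set of candidate speeds of a morphism. -/
def speedSet {m k s n : ℕ} (Z : Subgroup P)
    (F : ((Fin m → P) × (Fin k → P) × (Fin s → P)) → ((Fin n → P) × (Fin m → P))) : Set ℕ :=
  {η | 0 < η ∧ ∀ M ∈ M1 Z F, ∀ S : ℕ → Fin s → P, ZValued Z S → 1 ≤ outWt F M 1 S η}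

/-- `η` is the speed of the morphism `F`. -/
def IsSpeed {m k s n : ℕ} (Z : Subgroup P)
    (F : ((Fin m → P) × (Fin k → P) × (Fin s → P)) → ((Fin n → P) × (Fin m → P)))
    (η : ℕ) : Prop :=
  IsLeast (speedSet Z F) η

/-- The set `𝕀` of memory errors accessible from the identity memory with trivial
information and `Z`-valued stabilizers. -/
def Iset {m k s n : ℕ} (Z : Subgroup P)
    (F : ((Fin m → P) × (Fin k → P) × (Fin s → P)) → ((Fin n → P) × (Fin m → P))) :
    Set (Fin m → P) :=
  {M | ∃ (N : ℕ) (S : ℕ → Fin s → P), ZValued Z S ∧ M = convMem F 1 1 S N}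

/- ### Block `[[n,k]]` encoders -/

/-- `E` is undetected for the `[[n,k]]` encoder `C`. -/
def Undetected {k n : ℕ} (Z : Subgroup P)
    (C : ((Fin k → P) × (Fin (n - k) → P)) ≃* (Fin n → P)) (E : Fin n → P) : Prop :=
  E ≠ 1 ∧ ∀ j, (C.symm E).2 j ∈ Z

/-- `E` is harmful for the `[[n,k]]` encoder `C`. -/
def Harmful {k n : ℕ} (Z : Subgroup P)
    (C : ((Fin k → P) × (Fin (n - k) → P)) ≃* (Fin n → P)) (E : Fin n → P) : Prop :=
  Undetected Z C E ∧ (C.symm E).1 ≠ 1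

/-- The distance `d_c` of an `[[n,k]]` encoder. -/
noncomputable def encDist {k n : ℕ} (Z : Subgroup P)
    (C : ((Fin k → P) × (Fin (n - k) → P)) ≃* (Fin n → P)) : ℕ :=
  sInf {w | ∃ E, Harmful Z C E ∧ wt E = w}

/-- The degenerate distance `d_q` of an `[[n,k]]` encoder. -/
noncomputable def encDegenDist {k n : ℕ} (Z : Subgroup P)
    (C : ((Fin k → P) × (Fin (n - k) → P)) ≃* (Fin n → P)) : ℕ :=
  sInf {w | ∃ E, Undetected Z C E ∧ wt E = w}

/-- Weight distribution `a^{⊗N}(d)` of the blockwise encoder `C^{⊗N}`. -/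
noncomputable def aTensor {k n : ℕ} (Z : Subgroup P)
    (C : ((Fin k → P) × (Fin (n - k) → P)) ≃* (Fin n → P)) (N d : ℕ) : ℕ :=
  Set.ncard {E : (Fin N → Fin k → P) × (Fin N → Fin (n - k) → P) |
    (∀ i j, E.2 i j ∈ Z) ∧ E.1 ≠ 1 ∧ (∑ i, wt (C (E.1 i, E.2 i))) = d}

/- ### `[[n,k,m]]` encoders and their truncated decoders -/

/-- The truncated decoder `C̄` of an `[[n,k,m]]` encoder `C`, as a `[[k,n,0,m]]` morphism. -/
def truncDecoder {m k n : ℕ}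
    (C : ((Fin m → P) × (Fin k → P) × (Fin (n - k) → P)) ≃* ((Fin n → P) × (Fin m → P))) :
    ((Fin m → P) × (Fin n → P) × (Fin 0 → P)) → ((Fin k → P) × (Fin m → P)) :=
  fun x => ((C.symm (x.2.1, x.1)).2.1, (C.symm (x.2.1, x.1)).1)

/-- Weight distribution `a_N(w, d)` of a convolutional morphism. -/
noncomputable def aN {m k s n : ℕ} (Z : Subgroup P)
    (F : ((Fin m → P) × (Fin k → P) × (Fin s → P)) → ((Fin n → P) × (Fin m → P)))
    (N w d : ℕ) : ℕ :=
  Set.ncard {ML : (Fin m → P) × (Fin N → Fin k → P) |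
    (wt ML.1 + ∑ i, wt (ML.2 i)) = w ∧
    ∃ S : Fin N → Fin s → P, (∀ i j, S i j ∈ Z) ∧
      fullWt F ML.1 (pad ML.2) (pad S) N = d}

/-- Weight distribution `a_N(w, ≤ d)` of a convolutional morphism. -/
noncomputable def aNle {m k s n : ℕ} (Z : Subgroup P)
    (F : ((Fin m → P) × (Fin k → P) × (Fin s → P)) → ((Fin n → P) × (Fin m → P)))
    (N w : ℕ) (d : ℝ) : ℕ :=
  Set.ncard {ML : (Fin m → P) × (Fin N → Fin k → P) |
    (wt ML.1 + ∑ i, wt (ML.2 i)) = w ∧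
    ∃ S : Fin N → Fin s → P, (∀ i j, S i j ∈ Z) ∧
      (fullWt F ML.1 (pad ML.2) (pad S) N : ℝ) ≤ d}

/- ### Traces and detours -/

/-- Replace every information letter at (1-indexed flattened) position `> p` by the identity. -/
def truncAfter {k : ℕ} (L : ℕ → Fin k → P) (p : ℕ) : ℕ → Fin k → P :=
  fun i j => if i * k + (j : ℕ) + 1 ≤ p then L i j else 1

/-- `q` is the (1-indexed flattened) position of a non-identity information letter of the
first `N` information blocks. -/
def IsInfoPos {k : ℕ} (N : ℕ) (L : ℕ → Fin k → P) (q : ℕ) : Prop :=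
  ∃ (i : ℕ) (j : Fin k), i < N ∧ q = i * k + (j : ℕ) + 1 ∧ L i j ≠ 1

/-- The information part of the `i`-th truncature `E_{∖i}`. -/
def truncInfo {k : ℕ} (L : ℕ → Fin k → P) (p : ℕ → ℕ) : ℕ → (ℕ → Fin k → P)
  | 0 => 1
  | i + 1 => truncAfter L (p i)

/-- The number `N_i` of blocks making up the `i`-th truncature (with `N_0 = 0`):
the block containing the position `p i`. -/
def cutOf (k : ℕ) (p : ℕ → ℕ) : ℕ → ℕ
  | 0 => 0
  | i + 1 => (p i - 1) / k + 1

/-- Extend a stabilizer sequence: the first `cut` blocks come from `S`, the rest from `St`. -/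
def extendS {s : ℕ} (S : ℕ → Fin s → P) (cut : ℕ) (St : ℕ → Fin s → P) : ℕ → Fin s → P :=
  fun j => if j < cut then S j else St (j - cut)

/-- The intermediate memory error `M_i` attached to the `i`-th truncature `E_{∖i}`. -/
def traceMem {m k s n : ℕ}
    (F : ((Fin m → P) × (Fin k → P) × (Fin s → P)) → ((Fin n → P) × (Fin m → P)))
    (M : Fin m → P) (L : ℕ → Fin k → P) (S : ℕ → Fin s → P) (p : ℕ → ℕ) : ℕ → Fin m → P
  | 0 => M
  | i + 1 => convMem F M (truncAfter L (p i)) S ((p i - 1) / k + 1)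

/-- Paper-indexed positions: `pp p 0 = 0` and `pp p j = p (j-1)` for `j ≥ 1`. -/
def pp (p : ℕ → ℕ) : ℕ → ℕ
  | 0 => 0
  | j + 1 => p j

/-- The segment `[a, c)` of the trace `b` is a terminating detour: a nonempty run of `1`'s
followed by a single final `0`. -/
def IsTermDetour (b : ℕ → Prop) (a c : ℕ) : Prop :=
  a + 1 < c ∧ (∀ t, a ≤ t → t + 1 < c → b t) ∧ ¬ b (c - 1)

/-- The segment `[a, c)` of the trace `b` is a detour: a nonempty run of `1`'s, possibly
completed with a single final `0`. -/
def IsDetour (b : ℕ → Prop) (a c : ℕ) : Prop :=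
  (a < c ∧ ∀ t, a ≤ t → t < c → b t) ∨ IsTermDetour b a c

end Turbo

namespace TurboAux

open Turbo Finset

variable {P : Type} [Group P]

lemma wt_one {n : ℕ} : wt (1 : Fin n → P) = 0 := by
  simp [wt]

lemma wt_eq_zero_iff {n : ℕ} {E : Fin n → P} : wt E = 0 ↔ E = 1 := by
  rw [wt, Set.ncard_eq_zero (Set.toFinite _)]
  constructor
  · intro h
    funext i
    by_contra hi
    exact absurd h (Set.nonempty_iff_ne_empty.mp ⟨i, hi⟩)
  · intro h
    subst h
    simp

lemma wt_le {n : ℕ} (E : Fin n → P) : wt E ≤ n := by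
  have h := Set.ncard_le_ncard (Set.subset_univ {i | E i ≠ 1}) Set.finite_univ
  simpa [wt, Set.ncard_univ] using h

lemma undetected_block {k n : ℕ} (Z : Subgroup P)
    (C : ((Fin k → P) × (Fin (n - k) → P)) ≃* (Fin n → P))
    {L : Fin k → P} {S : Fin (n - k) → P} (hS : ∀ j, S j ∈ Z) (hne : (L, S) ≠ 1) :
    Undetected Z C (C (L, S)) := by
  constructor
  · intro h
    exact hne ((map_eq_one_iff C C.injective).mp h)
  · intro j
    rw [MulEquiv.symm_apply_apply]
    exact hS j

lemma harmful_block {k n : ℕ} (Z : Subgroup P)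
    (C : ((Fin k → P) × (Fin (n - k) → P)) ≃* (Fin n → P))
    {L : Fin k → P} {S : Fin (n - k) → P} (hS : ∀ j, S j ∈ Z) (hL : L ≠ 1) :
    Harmful Z C (C (L, S)) := by
  have hne : (L, S) ≠ 1 := by
    intro h
    exact hL (Prod.mk_eq_one.mp h).1
  refine ⟨undetected_block Z C hS hne, ?_⟩
  rw [MulEquiv.symm_apply_apply]
  exact hL

lemma degen_le_wt {k n : ℕ} (Z : Subgroup P)
    (C : ((Fin k → P) × (Fin (n - k) → P)) ≃* (Fin n → P))
    {L : Fin k → P} {S : Fin (n - k) → P} (hS : ∀ j, S j ∈ Z) (hne : (L, S) ≠ 1) :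
    encDegenDist Z C ≤ wt (C (L, S)) :=
  Nat.sInf_le ⟨C (L, S), undetected_block Z C hS hne, rfl⟩

lemma dist_le_wt {k n : ℕ} (Z : Subgroup P)
    (C : ((Fin k → P) × (Fin (n - k) → P)) ≃* (Fin n → P))
    {L : Fin k → P} {S : Fin (n - k) → P} (hS : ∀ j, S j ∈ Z) (hL : L ≠ 1) :
    encDist Z C ≤ wt (C (L, S)) :=
  Nat.sInf_le ⟨C (L, S), harmful_block Z C hS hL, rfl⟩

lemma part1 {k n : ℕ} (Z : Subgroup P)
    (C : ((Fin k → P) × (Fin (n - k) → P)) ≃* (Fin n → P))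
    (N d : ℕ) (hdc : d < encDist Z C) : aTensor Z C N d = 0 := by
  rw [aTensor]
  convert Set.ncard_empty ((Fin N → Fin k → P) × (Fin N → Fin (n - k) → P))
  rw [Set.eq_empty_iff_forall_notMem]
  rintro ⟨L, S⟩ ⟨hS, hL, hsum⟩
  obtain ⟨i, hi⟩ := Function.ne_iff.mp hL
  have h1 : encDist Z C ≤ wt (C (L i, S i)) := dist_le_wt Z C (hS i) hi
  have h2 : wt (C (L i, S i)) ≤ d := by
    rw [← hsum]
    exact Finset.single_le_sum (f := fun j => wt (C (L j, S j)))
      (fun j _ => Nat.zero_le _) (Finset.mem_univ i)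
  omega

lemma aTensor_eq_zero_of_no_harmful {k n : ℕ} (Z : Subgroup P)
    (C : ((Fin k → P) × (Fin (n - k) → P)) ≃* (Fin n → P))
    (h : ¬ {w | ∃ E, Harmful Z C E ∧ wt E = w}.Nonempty) (N d : ℕ) :
    aTensor Z C N d = 0 := by
  rw [aTensor]
  convert Set.ncard_empty ((Fin N → Fin k → P) × (Fin N → Fin (n - k) → P))
  rw [Set.eq_empty_iff_forall_notMem]
  rintro ⟨L, S⟩ ⟨hS, hL, hsum⟩
  obtain ⟨i, hi⟩ := Function.ne_iff.mp hL
  exact h ⟨wt (C (L i, S i)), C (L i, S i), harmful_block Z C (hS i) hi, rfl⟩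

lemma aTensor_eq_zero_of_large {k n : ℕ} (Z : Subgroup P)
    (C : ((Fin k → P) × (Fin (n - k) → P)) ≃* (Fin n → P))
    (N d : ℕ) (h : N * n < d) : aTensor Z C N d = 0 := by
  rw [aTensor]
  convert Set.ncard_empty ((Fin N → Fin k → P) × (Fin N → Fin (n - k) → P))
  rw [Set.eq_empty_iff_forall_notMem]
  rintro ⟨L, S⟩ ⟨hS, hL, hsum⟩
  have h2 : d ≤ N * n := by
    rw [← hsum]
    calc (∑ i, wt (C (L i, S i))) ≤ ∑ _i : Fin N, n :=
          Finset.sum_le_sum fun i _ => wt_le _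
      _ = N * n := by simp [Finset.sum_const, mul_comm]
  omega

/-- The main counting estimate. -/
lemma aTensor_le_sum_choose {k n : ℕ} (Z : Subgroup P) [Fintype P]
    (C : ((Fin k → P) × (Fin (n - k) → P)) ≃* (Fin n → P))
    {N d t : ℕ} (hdq : 2 ≤ encDegenDist Z C)
    (ht : t = (d - encDist Z C) / encDegenDist Z C + 1) :
    aTensor Z C N d ≤ ∑ s ∈ Finset.range (t + 1),
      (N * Fintype.card ((Fin k → P) × (Fin (n - k) → P))).choose s := by
  classical
  set Bl := (Fin k → P) × (Fin (n - k) → P) with hBl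
  set A : Set ((Fin N → Fin k → P) × (Fin N → Fin (n - k) → P)) :=
    {E | (∀ i j, E.2 i j ∈ Z) ∧ E.1 ≠ 1 ∧ (∑ i, wt (C (E.1 i, E.2 i))) = d} with hA
  set Φ : ((Fin N → Fin k → P) × (Fin N → Fin (n - k) → P)) → Finset (Fin N × Bl) :=
    fun E => (Finset.univ.filter fun i => ((E.1 i, E.2 i) : Bl) ≠ 1).image
      fun i => (i, (E.1 i, E.2 i)) with hΦ
  -- membership of Φ in Finsets of card ≤ t
  have hmem : ∀ E ∈ A, Φ E ∈ {T : Finset (Fin N × Bl) | T.card ≤ t} := by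
    rintro ⟨L, S⟩ ⟨hS, hL, hsum⟩
    set T : Finset (Fin N) := Finset.univ.filter fun i => ((L i, S i) : Bl) ≠ 1 with hT
    have hcardΦ : (Φ (L, S)).card = T.card := by
      apply Finset.card_image_of_injOn
      intro a _ b _ hab
      exact (Prod.ext_iff.mp hab).1
    have hsumT : (∑ i ∈ T, wt (C (L i, S i))) = d := by
      rw [← hsum]
      apply Finset.sum_subset (Finset.subset_univ T)
      intro i _ hiT
      have h1 : ((L i, S i) : Bl) = 1 := by
        by_contra h
        exact hiT (Finset.mem_filter.mpr ⟨Finset.mem_univ i, h⟩)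
      rw [h1, map_one]
      exact wt_one
    obtain ⟨i0, hi0⟩ := Function.ne_iff.mp hL
    have hi0T : i0 ∈ T := by
      refine Finset.mem_filter.mpr ⟨Finset.mem_univ i0, ?_⟩
      intro h
      exact hi0 (Prod.mk_eq_one.mp h).1
    have hTsum : encDist Z C + (T.card - 1) * encDegenDist Z C ≤ d := by
      rw [← hsumT, ← Finset.add_sum_erase T _ hi0T]
      apply Nat.add_le_add
      · exact dist_le_wt Z C (hS i0) hi0
      · have h2 := Finset.card_nsmul_le_sum (T.erase i0)
          (fun i => wt (C (L i, S i))) (encDegenDist Z C) ?_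
        · simpa [Finset.card_erase_of_mem hi0T, smul_eq_mul] using h2
        · intro i hi
          have hiT : i ∈ T := Finset.mem_of_mem_erase hi
          have hne : ((L i, S i) : Bl) ≠ 1 := (Finset.mem_filter.mp hiT).2
          exact degen_le_wt Z C (hS i) hne
    have h3 : (T.card - 1) * encDegenDist Z C ≤ d - encDist Z C := by omega
    have h4 : T.card - 1 ≤ (d - encDist Z C) / encDegenDist Z C :=
      (Nat.le_div_iff_mul_le (by omega)).mpr h3
    have h5 : T.card ≤ t := by omega
    simpa [hcardΦ] using h5
  -- injectivity of Φ
  have hinj : Function.Injective Φ := by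
    intro E E' h
    have hmemΦ : ∀ (E : (Fin N → Fin k → P) × (Fin N → Fin (n - k) → P))
        (i : Fin N) (b : Bl), (i, b) ∈ Φ E ↔ ((E.1 i, E.2 i) : Bl) = b ∧ b ≠ 1 := by
      intro E i b
      simp only [hΦ, Finset.mem_image, Finset.mem_filter, Finset.mem_univ, true_and,
        Prod.mk.injEq]
      constructor
      · rintro ⟨j, hj, rfl, rfl⟩
        exact ⟨rfl, hj⟩
      · rintro ⟨rfl, hb⟩
        exact ⟨i, hb, rfl, rfl⟩
    have key : ∀ i : Fin N, ((E.1 i, E.2 i) : Bl) = (E'.1 i, E'.2 i) := by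
      intro i
      by_cases hE1 : ((E.1 i, E.2 i) : Bl) = 1
      · by_cases hE2 : ((E'.1 i, E'.2 i) : Bl) = 1
        · rw [hE1, hE2]
        · exfalso
          have h1 : (i, ((E'.1 i, E'.2 i) : Bl)) ∈ Φ E' :=
            (hmemΦ E' i _).mpr ⟨rfl, hE2⟩
          rw [← h] at h1
          have h2 := (hmemΦ E i _).mp h1
          exact hE2 (h2.1 ▸ hE1)
      · have h1 : (i, ((E.1 i, E.2 i) : Bl)) ∈ Φ E := (hmemΦ E i _).mpr ⟨rfl, hE1⟩
        rw [h] at h1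
        exact ((hmemΦ E' i _).mp h1).1.symm
    have h1 : E.1 = E'.1 := funext fun i => congrArg Prod.fst (key i)
    have h2 : E.2 = E'.2 := funext fun i => congrArg Prod.snd (key i)
    exact Prod.ext_iff.mpr ⟨h1, h2⟩
  -- ncard comparison
  have hstep1 : aTensor Z C N d ≤ {T : Finset (Fin N × Bl) | T.card ≤ t}.ncard := by
    rw [aTensor]
    exact Set.ncard_le_ncard_of_injOn Φ hmem (hinj.injOn) (Set.toFinite _)
  have hstep2 : {T : Finset (Fin N × Bl) | T.card ≤ t}.ncard
      = (Finset.univ.filter fun T : Finset (Fin N × Bl) => T.card ≤ t).card := by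
    rw [← Set.ncard_coe_finset]
    congr 1
    ext T
    simp
  have hstep3 : (Finset.univ.filter fun T : Finset (Fin N × Bl) => T.card ≤ t).card
      ≤ ∑ s ∈ Finset.range (t + 1), (N * Fintype.card Bl).choose s := by
    have hsub : (Finset.univ.filter fun T : Finset (Fin N × Bl) => T.card ≤ t)
        ⊆ (Finset.range (t + 1)).biUnion
          (fun s => Finset.powersetCard s (Finset.univ : Finset (Fin N × Bl))) := by
      intro T hT
      have hTc : T.card ≤ t := (Finset.mem_filter.mp hT).2
      apply Finset.mem_biUnion.mpr
      exact ⟨T.card, Finset.mem_range.mpr (by omega),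
        Finset.mem_powersetCard.mpr ⟨Finset.subset_univ T, rfl⟩⟩
    calc (Finset.univ.filter fun T : Finset (Fin N × Bl) => T.card ≤ t).card
        ≤ _ := Finset.card_le_card hsub
      _ ≤ ∑ s ∈ Finset.range (t + 1),
            (Finset.powersetCard s (Finset.univ : Finset (Fin N × Bl))).card :=
          Finset.card_biUnion_le
      _ = ∑ s ∈ Finset.range (t + 1), (N * Fintype.card Bl).choose s := by
          apply Finset.sum_congr rfl
          intro s _
          rw [Finset.card_powersetCard, Finset.card_univ, Fintype.card_prod,
            Fintype.card_fin]
  calc aTensor Z C N d ≤ _ := hstep1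
    _ = _ := hstep2
    _ ≤ _ := hstep3

/-- Factorial-weighted bound on the partial binomial sum. -/
lemma sum_choose_mul_factorial_le {M t : ℕ} (hM : t ≤ M) :
    (∑ s ∈ Finset.range (t + 1), M.choose s) * t.factorial ≤ (t + 1) * M ^ t := by
  rw [Finset.sum_mul]
  have hterm : ∀ s ∈ Finset.range (t + 1), M.choose s * t.factorial ≤ M ^ t := by
    intro s hs
    have hst : s ≤ t := by
      have := Finset.mem_range.mp hs
      omega
    have h1 : t.factorial = s.factorial * (s + 1).ascFactorial (t - s) := by
      rw [Nat.factorial_mul_ascFactorial]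
      congr 1
      omega
    have h2 : M.choose s * s.factorial ≤ M ^ s := by
      rw [mul_comm, ← Nat.descFactorial_eq_factorial_mul_choose]
      exact Nat.descFactorial_le_pow M s
    calc M.choose s * t.factorial
        = M.choose s * s.factorial * (s + 1).ascFactorial (t - s) := by
          rw [h1, mul_assoc]
      _ ≤ M ^ s * (s + (t - s)) ^ (t - s) :=
          Nat.mul_le_mul h2 (Nat.ascFactorial_le_pow_add s (t - s))
      _ ≤ M ^ s * M ^ (t - s) :=
          Nat.mul_le_mul_left _ (Nat.pow_le_pow_left (by omega) _)
      _ = M ^ t := by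
          rw [← pow_add]
          congr 1
          omega
  calc ∑ s ∈ Finset.range (t + 1), M.choose s * t.factorial
      ≤ ∑ _s ∈ Finset.range (t + 1), M ^ t := Finset.sum_le_sum hterm
    _ = (t + 1) * M ^ t := by
        rw [Finset.sum_const, Finset.card_range, smul_eq_mul]

end TurboAux

open Turbo in
/-- Bound 1E: weight distribution of the blockwise outer encoder. -/
theorem bound_1E {P : Type} [Group P] [Finite P] (Z : Subgroup P) (hZ : Z ≠ ⊤)
    {k n : ℕ} (hkn : k ≤ n)
    (C : ((Fin k → P) × (Fin (n - k) → P)) ≃* (Fin n → P))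
    (hdq : 2 ≤ encDegenDist Z C) :
    (∀ N d : ℕ, 0 < d → d < encDist Z C → aTensor Z C N d = 0) ∧
    ∃ K : ℝ, 0 < K ∧ ∀ N : ℕ, 1 ≤ N → ∀ d : ℕ, encDist Z C ≤ d →
      (aTensor Z C N d : ℝ) ≤
        K ^ d * ((N : ℝ) / (d : ℝ)) ^
          (((d : ℝ) - (encDist Z C : ℝ)) / (encDegenDist Z C : ℝ) + 1) := by
  classical
  letI : Fintype P := Fintype.ofFinite P
  refine ⟨fun N d _ hdc => TurboAux.part1 Z C N d hdc, ?_⟩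
  -- the undetected set is nonempty
  have hque : {w | ∃ E, Undetected Z C E ∧ wt E = w}.Nonempty := by
    by_contra h
    rw [Set.not_nonempty_iff_eq_empty] at h
    rw [encDegenDist, h, Nat.sInf_empty] at hdq
    omega
  obtain ⟨w0, E0, hE0, hw0⟩ := hque
  obtain ⟨i0, hi0⟩ := Function.ne_iff.mp hE0.1
  have hn : 1 ≤ n := i0.pos
  have hPcard : 2 ≤ Fintype.card P :=
    Fintype.one_lt_card_iff_nontrivial.mpr ⟨⟨E0 i0, 1, hi0⟩⟩
  set c := Fintype.card ((Fin k → P) × (Fin (n - k) → P)) with hcdef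
  have hcn : n + 1 ≤ c := by
    have h1 : 2 ^ k * 2 ^ (n - k) ≤ c := by
      rw [hcdef, Fintype.card_prod, Fintype.card_fun, Fintype.card_fun, Fintype.card_fin,
        Fintype.card_fin]
      exact Nat.mul_le_mul (Nat.pow_le_pow_left hPcard k) (Nat.pow_le_pow_left hPcard (n - k))
    have h2 : 2 ^ k * 2 ^ (n - k) = 2 ^ n := by
      rw [← pow_add]
      congr 1
      omega
    have h3 : n < 2 ^ n := Nat.lt_two_pow_self (n := n)
    omega
  have hc0 : (0:ℝ) < (c:ℝ) := by exact_mod_cast (by omega : 0 < c)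
  have hn1 : (1:ℝ) ≤ (n:ℝ) := by exact_mod_cast hn
  refine ⟨2 * (c:ℝ) * Real.exp 1 * (n:ℝ) ^ 2, by positivity, ?_⟩
  intro N hN d hd
  have hbase0 : (0:ℝ) ≤ (N:ℝ)/(d:ℝ) := by positivity
  by_cases hharm : {w | ∃ E, Harmful Z C E ∧ wt E = w}.Nonempty
  swap
  · rw [TurboAux.aTensor_eq_zero_of_no_harmful Z C hharm N d, Nat.cast_zero]
    have := Real.exp_pos 1
    have := Real.rpow_nonneg hbase0
      (((d : ℝ) - (encDist Z C : ℝ)) / (encDegenDist Z C : ℝ) + 1)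
    positivity
  obtain ⟨E1, hE1, hwE1⟩ := Nat.sInf_mem hharm
  have hdcq : encDegenDist Z C ≤ encDist Z C := by
    have h1 : encDegenDist Z C ≤ wt E1 := Nat.sInf_le ⟨E1, hE1.1, rfl⟩
    have h2 : wt E1 = encDist Z C := hwE1
    omega
  have hd2 : 2 ≤ d := by omega
  by_cases hNd : d ≤ N * n
  swap
  · rw [TurboAux.aTensor_eq_zero_of_large Z C N d (by omega), Nat.cast_zero]
    have := Real.exp_pos 1
    have := Real.rpow_nonneg hbase0
      (((d : ℝ) - (encDist Z C : ℝ)) / (encDegenDist Z C : ℝ) + 1)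
    positivity
  -- main case
  set t := (d - encDist Z C) / encDegenDist Z C + 1 with htdef
  have htd : t ≤ d := by
    have h1 : (d - encDist Z C) / encDegenDist Z C ≤ (d - encDist Z C) / 2 :=
      Nat.div_le_div_left hdq (by omega)
    have h2 : (d - encDist Z C) / 2 ≤ (d - 2) / 2 :=
      Nat.div_le_div_right (by omega)
    omega
  have htM : t ≤ N * c :=
    le_trans htd (le_trans hNd (Nat.mul_le_mul_left N (by omega)))
  have hcount := TurboAux.aTensor_le_sum_choose Z C (N := N) hdq htdef
  have hfac := TurboAux.sum_choose_mul_factorial_le htM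
  have hd0 : (0:ℝ) < (d:ℝ) := by exact_mod_cast (by omega : 0 < d)
  have hfac0 : (0:ℝ) < (t.factorial : ℝ) := by exact_mod_cast t.factorial_pos
  have hbase : (0:ℝ) < (N:ℝ)/(d:ℝ) := by
    have hN0 : (0:ℝ) < (N:ℝ) := by exact_mod_cast hN
    positivity
  set e : ℝ := ((d : ℝ) - (encDist Z C : ℝ)) / (encDegenDist Z C : ℝ) + 1 with hedef
  have hq2 : (2:ℝ) ≤ (encDegenDist Z C : ℝ) := by exact_mod_cast hdq
  have hdc0 : (0:ℝ) ≤ (d:ℝ) - (encDist Z C : ℝ) := by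
    have : (encDist Z C : ℝ) ≤ (d:ℝ) := by exact_mod_cast hd
    linarith
  have hte : (t : ℝ) ≤ e := by
    have h1 : (((d - encDist Z C) / encDegenDist Z C : ℕ) : ℝ)
        ≤ ((d - encDist Z C : ℕ) : ℝ) / ((encDegenDist Z C : ℕ) : ℝ) := Nat.cast_div_le
    rw [Nat.cast_sub hd] at h1
    rw [htdef, hedef]
    push_cast
    linarith
  have ht1n : 1 ≤ t := by rw [htdef]; exact Nat.le_add_left 1 _
  have ht1 : (1:ℝ) ≤ (t:ℝ) := by exact_mod_cast ht1n
  have he0 : (0:ℝ) ≤ e := by linarith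
  have hed : e ≤ (d:ℝ) + 1 := by
    rw [hedef]
    have h1 := div_le_self hdc0 (by linarith : (1:ℝ) ≤ (encDegenDist Z C : ℝ))
    have h2 : (0:ℝ) ≤ (encDist Z C : ℝ) := by positivity
    linarith
  have hstep1 : (aTensor Z C N d : ℝ)
      ≤ ((t:ℝ) + 1) * ((N:ℝ) * (c:ℝ)) ^ t / (t.factorial : ℝ) := by
    rw [le_div_iff₀ hfac0]
    calc (aTensor Z C N d : ℝ) * (t.factorial : ℝ)
        ≤ (((t + 1) * (N * c) ^ t : ℕ) : ℝ) := by
          exact_mod_cast le_trans (Nat.mul_le_mul_right t.factorial hcount) hfac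
      _ = ((t:ℝ) + 1) * ((N:ℝ) * (c:ℝ)) ^ t := by push_cast; ring
  have hinv : (1:ℝ)/(n:ℝ) ≤ (N:ℝ)/(d:ℝ) := by
    rw [div_le_div_iff₀ (by linarith) hd0]
    have hNn : (d:ℝ) ≤ (N:ℝ) * (n:ℝ) := by exact_mod_cast hNd
    linarith
  have hD : ((N:ℝ)/(d:ℝ)) ^ t ≤ (n:ℝ) ^ (d + 1) * ((N:ℝ)/(d:ℝ)) ^ e := by
    rw [← Real.rpow_natCast ((N:ℝ)/(d:ℝ)) t]
    rcases le_or_gt 1 ((N:ℝ)/(d:ℝ)) with h1 | h1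
    · calc ((N:ℝ)/(d:ℝ)) ^ (t:ℝ) ≤ ((N:ℝ)/(d:ℝ)) ^ e :=
          Real.rpow_le_rpow_of_exponent_le h1 hte
        _ ≤ (n:ℝ) ^ (d + 1) * ((N:ℝ)/(d:ℝ)) ^ e :=
          le_mul_of_one_le_left (Real.rpow_nonneg hbase.le _) (one_le_pow₀ hn1)
    · have h2 : ((1:ℝ)/(n:ℝ)) ^ e ≤ ((N:ℝ)/(d:ℝ)) ^ e :=
        Real.rpow_le_rpow (by positivity) hinv he0
      have h3 : ((1:ℝ)/(n:ℝ)) ^ ((d:ℝ) + 1) ≤ ((1:ℝ)/(n:ℝ)) ^ e := by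
        apply Real.rpow_le_rpow_of_exponent_ge (by positivity) _ hed
        rw [div_le_one (by linarith)]
        exact hn1
      have h4 : ((1:ℝ)/(n:ℝ)) ^ ((d:ℝ) + 1) = ((1:ℝ)/(n:ℝ)) ^ (d + 1 : ℕ) := by
        rw [← Real.rpow_natCast ((1:ℝ)/(n:ℝ)) (d + 1)]
        norm_num
      have h5 : (1:ℝ) = (n:ℝ) ^ (d + 1) * ((1:ℝ)/(n:ℝ)) ^ (d + 1 : ℕ) := by
        rw [← mul_pow, mul_one_div, div_self (by linarith : (n:ℝ) ≠ 0), one_pow]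
      calc ((N:ℝ)/(d:ℝ)) ^ (t:ℝ) ≤ 1 :=
          Real.rpow_le_one hbase.le h1.le (by positivity)
        _ = (n:ℝ) ^ (d + 1) * ((1:ℝ)/(n:ℝ)) ^ (d + 1 : ℕ) := h5
        _ ≤ (n:ℝ) ^ (d + 1) * ((N:ℝ)/(d:ℝ)) ^ e := by
            apply mul_le_mul_of_nonneg_left _ (by positivity)
            rw [← h4]
            exact le_trans h3 h2
  have hExp : ((d:ℝ)) ^ t / (t.factorial : ℝ) ≤ Real.exp 1 ^ d := by
    rw [Real.exp_one_pow]
    exact Real.pow_div_factorial_le_exp _ hd0.le t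
  have hc1 : (1:ℝ) ≤ (c:ℝ) := by exact_mod_cast (by omega : 1 ≤ c)
  have htd1 : (t:ℝ) + 1 ≤ (d:ℝ) + 1 := by
    have : (t:ℝ) ≤ (d:ℝ) := by exact_mod_cast htd
    linarith
  have h2d : (d:ℝ) + 1 ≤ (2:ℝ) ^ d := by
    have := Nat.lt_two_pow_self (n := d)
    exact_mod_cast (by omega : d + 1 ≤ 2 ^ d)
  have hnd : (n:ℝ) ^ (d + 1) ≤ ((n:ℝ) ^ 2) ^ d := by
    rw [← pow_mul]
    exact pow_le_pow_right₀ hn1 (by omega)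
  calc (aTensor Z C N d : ℝ)
      ≤ ((t:ℝ) + 1) * ((N:ℝ) * (c:ℝ)) ^ t / (t.factorial : ℝ) := hstep1
    _ = ((t:ℝ) + 1) * (c:ℝ) ^ t * ((d:ℝ) ^ t / (t.factorial : ℝ))
        * ((N:ℝ)/(d:ℝ)) ^ t := by
        field_simp
        rw [← mul_pow, ← mul_pow]
        congr 1
        rw [mul_div_assoc', eq_div_iff hd0.ne']
        ring
    _ ≤ ((d:ℝ) + 1) * (c:ℝ) ^ d * (Real.exp 1 ^ d)
        * ((n:ℝ) ^ (d + 1) * ((N:ℝ)/(d:ℝ)) ^ e) := by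
        have hpos1 : (0:ℝ) ≤ (d:ℝ) ^ t / (t.factorial : ℝ) := by positivity
        have hexp1 : (0:ℝ) ≤ Real.exp 1 ^ d := by positivity
        apply mul_le_mul
        · apply mul_le_mul
          · exact mul_le_mul htd1 (pow_le_pow_right₀ hc1 htd) (by positivity) (by linarith)
          · exact hExp
          · exact hpos1
          · positivity
        · exact hD
        · positivity
        · positivity
    _ ≤ ((2:ℝ) ^ d * (c:ℝ) ^ d * Real.exp 1 ^ d)
        * (((n:ℝ) ^ 2) ^ d * ((N:ℝ)/(d:ℝ)) ^ e) := by
        apply mul_le_mul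
        · apply mul_le_mul_of_nonneg_right _ (by positivity)
          exact mul_le_mul_of_nonneg_right h2d (by positivity)
        · exact mul_le_mul_of_nonneg_right hnd (Real.rpow_nonneg hbase0 e)
        · positivity
        · positivity
    _ = (2 * (c:ℝ) * Real.exp 1 * (n:ℝ) ^ 2) ^ d * ((N:ℝ)/(d:ℝ)) ^ e := by
        rw [mul_pow, mul_pow, mul_pow]
        ring
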